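/- Fix c₂, c₃, c₄ > 0, λ₁ > 0, Γ > 0 and φ > 1. For s > 0 define W₂(s) = c₂/s, W₄(s) = c₄/s, p(s) = 1 − e^{−W₂(s)Γ}, M(s) = φ/(λ₁ p(s)) and W₁(s) = c₃/M(s), and assume W₁(s) ≠ W₂(s) for all sufficiently large s. Define P(s) = (1 − e^{−W₄(s)Γ})(1 − e^{−W₂(s)Γ}) + e^{−W₄(s)Γ}·[ (1/φ)·( (1 − e^{−W₂(s)Γ}) + W₂(s)(e^{−W₁(s)Γ} − e^{−W₂(s)Γ})/(W₁(s) − W₂(s)) ) + (1 − 1/φ)·(1 − e^{−W₂(s)Γ}) ]. Then lim_{s→∞} s·P(s) = (1 − 1/φ)·c₂·Γ. -/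

import Mathlib

open Real Filter

/-- Outage probability of the incremental on-off policy (Eq. (23) with
`Γ'_th = Γ_th = Γ` and `θ = 1/φ`), as a function of the link rates. -/
noncomputable def iofpOutage (Γ W1 W2 W4 φ : ℝ) : ℝ :=
  (1 - Real.exp (-W4 * Γ)) * (1 - Real.exp (-W2 * Γ))
    + Real.exp (-W4 * Γ) *
      ((1 / φ) * ((1 - Real.exp (-W2 * Γ))
          + W2 * (Real.exp (-W1 * Γ) - Real.exp (-W2 * Γ)) / (W1 - W2))
        + (1 - 1 / φ) * (1 - Real.exp (-W2 * Γ)))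

/-- Probability that the direct link fails, `p(s) = 1 - exp(-W₂(s) Γ)` with
`W₂(s) = c₂/s`. -/
noncomputable def pFail (c2 Γ : ℝ) (s : ℝ) : ℝ := 1 - Real.exp (-(c2 / s) * Γ)

/-- Energy drawn per relay transmission, `M(s) = φ/(λ₁ p(s))`, keeping the
stability parameter `φ` fixed. -/
noncomputable def Mfn (c2 lam Γ φ : ℝ) (s : ℝ) : ℝ := φ / (lam * pFail c2 Γ s)

lemma exp_slope_lim' : Tendsto (fun x : ℝ => (Real.exp x - 1) / x)
    (nhdsWithin 0 {(0:ℝ)}ᶜ) (nhds 1) := by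
  have h := Real.hasDerivAt_exp 0
  rw [hasDerivAt_iff_tendsto_slope] at h
  simpa [slope_fun_def, Real.exp_zero, div_eq_inv_mul] using h

lemma sp_lim' (c Γ : ℝ) (hc : 0 < c) (hΓ : 0 < Γ) :
    Tendsto (fun s : ℝ => s * (1 - Real.exp (-(c / s) * Γ))) atTop (nhds (c * Γ)) := by
  have hu : Tendsto (fun s : ℝ => -(c / s) * Γ) atTop (nhdsWithin 0 {(0:ℝ)}ᶜ) := by
    rw [tendsto_nhdsWithin_iff]
    constructor
    · have : Tendsto (fun s : ℝ => c / s) atTop (nhds 0) := by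
        simpa [div_eq_mul_inv] using (tendsto_inv_atTop_zero.const_mul c)
      simpa using ((this.neg).mul_const Γ)
    · filter_upwards [eventually_gt_atTop (0:ℝ)] with s hs
      have : c / s > 0 := div_pos hc hs
      simp only [Set.mem_compl_iff, Set.mem_singleton_iff]
      nlinarith
  have hcomp := (exp_slope_lim'.comp hu).const_mul (c * Γ)
  rw [mul_one] at hcomp
  refine hcomp.congr' ?_
  filter_upwards [eventually_gt_atTop (0:ℝ)] with s hs
  have hs' : s ≠ 0 := hs.ne'
  have hd : -(c / s) * Γ ≠ 0 := by
    have : c / s > 0 := div_pos hc hs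
    nlinarith
  simp only [Function.comp_apply]
  field_simp
  ring

lemma ratio_lim' (Γ : ℝ) (hΓ : 0 < Γ) (f g : ℝ → ℝ)
    (hf : Tendsto f atTop (nhds 0)) (hg : Tendsto g atTop (nhds 0))
    (hfg : ∀ᶠ s in atTop, f s ≠ g s) :
    Tendsto (fun s => (Real.exp (-f s * Γ) - Real.exp (-g s * Γ)) / (f s - g s))
      atTop (nhds (-Γ)) := by
  set t : ℝ → ℝ := fun s => -(f s - g s) * Γ with ht
  have htlim : Tendsto t atTop (nhdsWithin 0 {(0:ℝ)}ᶜ) := by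
    rw [tendsto_nhdsWithin_iff]
    constructor
    · have h2 : Tendsto (fun s => f s - g s) atTop (nhds 0) := by simpa using hf.sub hg
      simpa [ht, neg_sub] using (h2.neg).mul_const Γ
    · filter_upwards [hfg] with s hs
      simp only [Set.mem_compl_iff, Set.mem_singleton_iff, ht]
      have : f s - g s ≠ 0 := sub_ne_zero.mpr hs
      intro h
      rcases mul_eq_zero.mp h with h | h
      · exact this (neg_eq_zero.mp h)
      · exact hΓ.ne' h
  have hb : Tendsto (fun s => Real.exp (-g s * Γ)) atTop (nhds 1) := by
    have : Tendsto (fun s => -g s * Γ) atTop (nhds 0) := by simpa using (hg.neg).mul_const Γ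
    simpa [Function.comp_def] using (Real.continuous_exp.tendsto 0).comp this
  have hslope := exp_slope_lim'.comp htlim
  have hmain : Tendsto (fun s => -Γ * Real.exp (-g s * Γ) * ((Real.exp (t s) - 1) / t s))
      atTop (nhds (-Γ * 1 * 1)) := ((tendsto_const_nhds.mul hb).mul hslope)
  rw [mul_one, mul_one] at hmain
  refine hmain.congr' ?_
  filter_upwards [hfg] with s hs
  have hd : f s - g s ≠ 0 := sub_ne_zero.mpr hs
  have htne : t s ≠ 0 := by
    simp only [ht]
    intro h
    rcases mul_eq_zero.mp h with h | h
    · exact hd (neg_eq_zero.mp h)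
    · exact hΓ.ne' h
  have hexp : Real.exp (-f s * Γ) = Real.exp (t s) * Real.exp (-g s * Γ) := by
    rw [← Real.exp_add, ht]; ring_nf
  rw [hexp, ← mul_div_assoc, div_eq_div_iff htne hd]
  have ht' : t s = -(f s - g s) * Γ := rfl
  rw [ht']
  ring

/-- Diversity analysis of the IOFP: with `W₂(s) = c₂/s`, `W₄(s) = c₄/s`,
`M(s) = φ/(λ₁ p(s))` and `W₁(s) = c₃/M(s)`, the outage probability `P(s)`
satisfies `s · P(s) → (1 - 1/φ) c₂ Γ`, i.e. diversity order one. -/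
theorem stmt17 (c2 c3 c4 lam Γ φ : ℝ)
    (hc2 : 0 < c2) (hc3 : 0 < c3) (hc4 : 0 < c4)
    (hlam : 0 < lam) (hΓ : 0 < Γ) (hφ : 1 < φ)
    (hne : ∀ᶠ s in atTop, c3 / Mfn c2 lam Γ φ s ≠ c2 / s) :
    Tendsto (fun s => s * iofpOutage Γ (c3 / Mfn c2 lam Γ φ s) (c2 / s) (c4 / s) φ)
      atTop (nhds ((1 - 1 / φ) * c2 * Γ)) := by
  set W1 : ℝ → ℝ := fun s => c3 / Mfn c2 lam Γ φ s with hW1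
  -- limits of the building blocks
  have hW2lim : Tendsto (fun s : ℝ => c2 / s) atTop (nhds 0) := by
    simpa [div_eq_mul_inv] using (tendsto_inv_atTop_zero.const_mul c2)
  have hp0 : Tendsto (fun s => pFail c2 Γ s) atTop (nhds 0) := by
    have h0 : Tendsto (fun s : ℝ => -(c2 / s) * Γ) atTop (nhds 0) := by
      simpa using (hW2lim.neg).mul_const Γ
    have := (Real.continuous_exp.tendsto 0).comp h0
    simp only [Real.exp_zero] at this
    have h1 := tendsto_const_nhds (x := (1:ℝ)) (f := atTop (α := ℝ))
    simpa [pFail] using h1.sub this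
  have hW1lim : Tendsto W1 atTop (nhds 0) := by
    have heq : ∀ s, W1 s = c3 * (lam * pFail c2 Γ s) / φ := by
      intro s
      simp only [hW1, Mfn, div_div_eq_mul_div]
    have : Tendsto (fun s => c3 * (lam * pFail c2 Γ s) / φ) atTop
        (nhds (c3 * (lam * 0) / φ)) := ((hp0.const_mul lam).const_mul c3).div_const φ
    simpa [heq, funext_iff] using this.congr (fun s => (heq s).symm)
  have hA := sp_lim' c2 Γ hc2 hΓ
  have hB : Tendsto (fun s : ℝ => Real.exp (-(c4 / s) * Γ)) atTop (nhds 1) := by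
    have h0 : Tendsto (fun s : ℝ => -(c4 / s) * Γ) atTop (nhds 0) := by
      have : Tendsto (fun s : ℝ => c4 / s) atTop (nhds 0) := by
        simpa [div_eq_mul_inv] using (tendsto_inv_atTop_zero.const_mul c4)
      simpa using (this.neg).mul_const Γ
    simpa [Function.comp_def] using (Real.continuous_exp.tendsto 0).comp h0
  have hQ := ratio_lim' Γ hΓ W1 (fun s => c2 / s) hW1lim hW2lim hne
  -- assemble the limit of the rearranged expression
  have hG : Tendsto (fun s =>
      (1 - Real.exp (-(c4 / s) * Γ)) * (s * (1 - Real.exp (-(c2 / s) * Γ)))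
        + Real.exp (-(c4 / s) * Γ) *
          ((1 / φ) * (s * (1 - Real.exp (-(c2 / s) * Γ))
              + c2 * ((Real.exp (-W1 s * Γ) - Real.exp (-(c2 / s) * Γ)) / (W1 s - c2 / s)))
            + (1 - 1 / φ) * (s * (1 - Real.exp (-(c2 / s) * Γ)))))
      atTop (nhds ((1 - 1) * (c2 * Γ)
        + 1 * ((1 / φ) * (c2 * Γ + c2 * (-Γ)) + (1 - 1 / φ) * (c2 * Γ)))) := by
    exact ((tendsto_const_nhds.sub hB).mul hA).add
      (hB.mul (((hA.add (hQ.const_mul c2)).const_mul (1 / φ)).add (hA.const_mul (1 - 1 / φ))))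
  have hval : (1 - 1) * (c2 * Γ)
      + 1 * ((1 / φ) * (c2 * Γ + c2 * (-Γ)) + (1 - 1 / φ) * (c2 * Γ))
      = (1 - 1 / φ) * c2 * Γ := by ring
  rw [hval] at hG
  refine Tendsto.congr' ?_ hG
  filter_upwards [eventually_gt_atTop (0:ℝ), hne] with s hs hnes
  have hs' : s ≠ 0 := hs.ne'
  have hd : W1 s - c2 / s ≠ 0 := sub_ne_zero.mpr hnes
  have hφ' : φ ≠ 0 := by positivity
  simp only [iofpOutage, hW1] at hd ⊢
  field_simp
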